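/- For the monic truncated Hermite polynomials, the recurrence coefficients satisfy z·γ_n'(z) = 2γ_n(z)·(γ_{n−1}(z) − γ_{n+1}(z) + 1) for all n ≥ 1 and z > 0. -/

import Mathlib

open Polynomial

/-- The truncated Hermite linear functional `L[p] = ∫_{-z}^{z} p(x) e^{-x²} dx`. -/
noncomputable def truncL (z : ℝ) (p : Polynomial ℝ) : ℝ :=
  ∫ x in (-z)..z, p.eval x * Real.exp (-x ^ 2)


open intervalIntegral MeasureTheory

lemma truncInt (z : ℝ) (p : Polynomial ℝ) :
    IntervalIntegrable (fun x => p.eval x * Real.exp (-x ^ 2)) volume (-z) z :=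
  (Continuous.mul (p.continuous_aeval) (by continuity)).intervalIntegrable _ _

lemma truncL_add (z : ℝ) (p q : Polynomial ℝ) :
    truncL z (p + q) = truncL z p + truncL z q := by
  unfold truncL
  rw [← intervalIntegral.integral_add (truncInt z p) (truncInt z q)]
  simp [add_mul]

lemma truncL_zero (z : ℝ) : truncL z 0 = 0 := by simp [truncL]

lemma truncL_Cmul (z : ℝ) (a : ℝ) (p : Polynomial ℝ) :
    truncL z (C a * p) = a * truncL z p := by
  unfold truncL
  rw [← intervalIntegral.integral_const_mul]
  simp [mul_assoc]

lemma truncL_sub (z : ℝ) (p q : Polynomial ℝ) :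
    truncL z (p - q) = truncL z p - truncL z q := by
  have := truncL_add z (p - q) q
  simp at this; linarith

lemma truncL_sum (z : ℝ) {ι : Type*} (s : Finset ι) (f : ι → Polynomial ℝ) :
    truncL z (∑ i ∈ s, f i) = ∑ i ∈ s, truncL z (f i) := by
  classical
  induction s using Finset.induction with
  | empty => simp [truncL_zero]
  | insert a s hx ih => simp [Finset.sum_insert hx, truncL_add, ih]

lemma truncL_sq_pos {z : ℝ} (hz : 0 < z) {p : Polynomial ℝ} (hp : p ≠ 0) :
    0 < truncL z (p * p) := by
  unfold truncL
  rw [intervalIntegral.integral_of_le (by linarith)]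
  have hne : -z < z := by linarith
  rw [MeasureTheory.setIntegral_pos_iff_support_of_nonneg_ae]
  · -- support has positive measure
    have hsub : Set.Ioc (-z) z \ (p.rootSet ℝ) ⊆
        (Function.support fun x => (p*p).eval x * Real.exp (-x ^ 2)) ∩ Set.Ioc (-z) z := by
      intro x hx
      rcases hx with ⟨hx1, hx2⟩
      refine ⟨?_, hx1⟩
      have : p.eval x ≠ 0 := by
        intro hev
        exact hx2 (by rw [Polynomial.mem_rootSet_of_ne hp]; simpa using hev)
      simp only [Function.mem_support, Polynomial.eval_mul]
      positivity
    have hfin : (volume (p.rootSet ℝ : Set ℝ)) = 0 :=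
      Set.Finite.measure_zero (Polynomial.rootSet_finite p ℝ) volume
    have h1 : volume (Set.Ioc (-z) z \ (p.rootSet ℝ : Set ℝ)) = volume (Set.Ioc (-z) z) :=
      MeasureTheory.measure_diff_null hfin
    have h2 : (0:ENNReal) < volume (Set.Ioc (-z) z) := by
      rw [Real.volume_Ioc]; simp; linarith
    calc (0:ENNReal) < volume (Set.Ioc (-z) z \ (p.rootSet ℝ : Set ℝ)) := by rw [h1]; exact h2
      _ ≤ _ := measure_mono hsub
  · refine Filter.Eventually.of_forall fun x => ?_
    simp only [Polynomial.eval_mul, Pi.zero_apply]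
    exact mul_nonneg (mul_self_nonneg _) (Real.exp_nonneg _)
  · exact ((truncInt z (p*p)).1.mono_set (by simp))

/-- moments -/
noncomputable def mom (k : ℕ) (z : ℝ) : ℝ := ∫ x in (-z)..z, x ^ k * Real.exp (-x ^ 2)

lemma momInt (k : ℕ) (a b : ℝ) :
    IntervalIntegrable (fun x : ℝ => x ^ k * Real.exp (-x ^ 2)) volume a b :=
  (Continuous.mul (by continuity) (by continuity)).intervalIntegrable _ _

lemma hasDerivAt_mom (k : ℕ) (z : ℝ) :
    HasDerivAt (mom k) ((z ^ k + (-z) ^ k) * Real.exp (-z ^ 2)) z := by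
  have hG : ∀ t : ℝ, HasDerivAt (fun u => ∫ x in (0:ℝ)..u, x ^ k * Real.exp (-x ^ 2))
      (t ^ k * Real.exp (-t ^ 2)) t := by
    intro t
    exact intervalIntegral.integral_hasDerivAt_right (momInt k 0 t)
      ((Continuous.mul (by continuity) (by continuity)).aestronglyMeasurable.stronglyMeasurableAtFilter)
      (Continuous.continuousAt (by continuity))
  have hrep : mom k = fun z => (∫ x in (0:ℝ)..z, x ^ k * Real.exp (-x ^ 2))
      - ∫ x in (0:ℝ)..(-z), x ^ k * Real.exp (-x ^ 2) := by
    funext z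
    have h1 := intervalIntegral.integral_add_adjacent_intervals (momInt k (-z) 0) (momInt k 0 z)
    have h2 : (∫ x in (-z)..(0:ℝ), x ^ k * Real.exp (-x ^ 2))
        = - ∫ x in (0:ℝ)..(-z), x ^ k * Real.exp (-x ^ 2) := intervalIntegral.integral_symm 0 (-z)
    unfold mom
    rw [← h1, h2]; ring
  rw [hrep]
  have h2 : HasDerivAt (fun z : ℝ => ∫ x in (0:ℝ)..(-z), x ^ k * Real.exp (-x ^ 2))
      (((-z) ^ k * Real.exp (-(-z) ^ 2)) * (-1)) z := (hG (-z)).comp z (hasDerivAt_neg z)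
  have := (hG z).fun_sub h2
  refine this.congr_deriv ?_
  simp [neg_sq]
  ring

lemma truncL_eq_sum (z : ℝ) (d : ℕ) (p : Polynomial ℝ) (hd : p.natDegree ≤ d) :
    truncL z p = ∑ k ∈ Finset.range (d + 1), p.coeff k * mom k z := by
  unfold truncL mom
  have h1 : ∀ x : ℝ, p.eval x * Real.exp (-x ^ 2)
      = ∑ k ∈ Finset.range (d + 1), p.coeff k * (x ^ k * Real.exp (-x ^ 2)) := by
    intro x
    rw [Polynomial.eval_eq_sum_range' (lt_of_le_of_lt hd (Nat.lt_succ_self d)), Finset.sum_mul]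
    exact Finset.sum_congr rfl fun k _ => by ring
  simp_rw [h1]
  rw [intervalIntegral.integral_finset_sum (fun k _ =>
    ((momInt k (-z) z).const_mul (p.coeff k)))]
  exact Finset.sum_congr rfl fun k _ => intervalIntegral.integral_const_mul _ _

lemma hasDerivAt_truncL (d : ℕ) (c : ℝ → Polynomial ℝ) (z0 : ℝ)
    (hd : ∀ z, (c z).natDegree ≤ d)
    (hc : ∀ k, DifferentiableAt ℝ (fun z => (c z).coeff k) z0) :
    HasDerivAt (fun z => truncL z (c z))
      (((c z0).eval z0 + (c z0).eval (-z0)) * Real.exp (-z0 ^ 2)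
        + ∑ k ∈ Finset.range (d + 1), deriv (fun z => (c z).coeff k) z0 * mom k z0) z0 := by
  have hrep : (fun z => truncL z (c z))
      = fun z => ∑ k ∈ Finset.range (d + 1), (c z).coeff k * mom k z :=
    funext fun z => truncL_eq_sum z d (c z) (hd z)
  rw [hrep]
  have hs : HasDerivAt (fun z => ∑ k ∈ Finset.range (d + 1), (c z).coeff k * mom k z)
      (∑ k ∈ Finset.range (d + 1), (deriv (fun z => (c z).coeff k) z0 * mom k z0
        + (c z0).coeff k * ((z0 ^ k + (-z0) ^ k) * Real.exp (-z0 ^ 2)))) z0 :=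
    HasDerivAt.fun_sum fun k _ => ((hc k).hasDerivAt.fun_mul (hasDerivAt_mom k z0))
  convert hs using 1
  rw [Finset.sum_add_distrib]
  have he : ∀ x : ℝ, (c z0).eval x = ∑ k ∈ Finset.range (d + 1), (c z0).coeff k * x ^ k :=
    fun x => Polynomial.eval_eq_sum_range' (lt_of_le_of_lt (hd z0) (Nat.lt_succ_self d)) x
  rw [he z0, he (-z0), add_comm]
  congr 1
  rw [← Finset.sum_add_distrib, Finset.sum_mul]
  exact Finset.sum_congr rfl fun k _ => by ring

lemma differentiableAt_truncL (d : ℕ) (c : ℝ → Polynomial ℝ) (z0 : ℝ)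
    (hd : ∀ z, (c z).natDegree ≤ d)
    (hc : ∀ k, DifferentiableAt ℝ (fun z => (c z).coeff k) z0) :
    DifferentiableAt ℝ (fun z => truncL z (c z)) z0 :=
  (hasDerivAt_truncL d c z0 hd hc).differentiableAt

noncomputable def gs (z : ℝ) : ℕ → Polynomial ℝ
  | 0 => 1
  | (n + 1) => X ^ (n + 1) - ∑ k ∈ (Finset.range (n + 1)).attach,
      C (truncL z (X ^ (n + 1) * gs z k.1) / truncL z (gs z k.1 * gs z k.1)) * gs z k.1
  decreasing_by all_goals (have hk := Finset.mem_range.mp k.2; omega)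

lemma gs_zero (z : ℝ) : gs z 0 = 1 := by rw [gs.eq_1]

lemma gs_succ (z : ℝ) (n : ℕ) : gs z (n + 1) = X ^ (n + 1) - ∑ k ∈ (Finset.range (n + 1)).attach,
      C (truncL z (X ^ (n + 1) * gs z k.1) / truncL z (gs z k.1 * gs z k.1)) * gs z k.1 := by
  rw [gs.eq_2]

lemma gs_natDegree_le (z : ℝ) (n : ℕ) : (gs z n).natDegree ≤ n := by
  induction n using Nat.strong_induction_on with
  | _ n ih =>
    match n with
    | 0 => simp [gs_zero]
    | (m + 1) =>
      rw [gs_succ]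
      refine le_trans (Polynomial.natDegree_sub_le _ _) ?_
      simp only [Polynomial.natDegree_X_pow, max_le_iff, le_refl, true_and]
      refine le_trans (Polynomial.natDegree_sum_le_of_forall_le _ _ fun k _ => ?_) (by omega : m ≤ m + 1)
      refine le_trans (Polynomial.natDegree_C_mul_le _ _) ?_
      have hk := Finset.mem_range.mp k.2
      exact le_trans (ih k.1 (by omega)) (by omega)

lemma gs_sum_natDegree_le (z : ℝ) (m : ℕ) :
    (∑ k ∈ (Finset.range (m + 1)).attach,
      C (truncL z (X ^ (m + 1) * gs z k.1) / truncL z (gs z k.1 * gs z k.1)) * gs z k.1).natDegree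
      ≤ m := by
  refine Polynomial.natDegree_sum_le_of_forall_le _ _ fun k _ => ?_
  refine le_trans (Polynomial.natDegree_C_mul_le _ _) ?_
  have hk := Finset.mem_range.mp k.2
  exact le_trans (gs_natDegree_le z k.1) (by omega)

lemma gs_coeff_self (z : ℝ) (n : ℕ) : (gs z n).coeff n = 1 := by
  match n with
  | 0 => simp [gs_zero]
  | (m + 1) =>
    rw [gs_succ, Polynomial.coeff_sub, Polynomial.coeff_X_pow,
      Polynomial.coeff_eq_zero_of_natDegree_lt (lt_of_le_of_lt (gs_sum_natDegree_le z m) (Nat.lt_succ_self m))]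
    simp

lemma gs_natDegree (z : ℝ) (n : ℕ) : (gs z n).natDegree = n :=
  Polynomial.natDegree_eq_of_le_of_coeff_ne_zero (gs_natDegree_le z n)
    (by rw [gs_coeff_self]; norm_num)

lemma gs_monic (z : ℝ) (n : ℕ) : (gs z n).Monic :=
  Polynomial.monic_of_natDegree_le_of_coeff_eq_one n (gs_natDegree_le z n) (gs_coeff_self z n)

lemma gs_ne_zero (z : ℝ) (n : ℕ) : gs z n ≠ 0 := (gs_monic z n).ne_zero

section Orth

variable {z : ℝ} {f : ℕ → Polynomial ℝ}

lemma orth_lower (fmonic : ∀ n, (f n).Monic) (fdeg : ∀ n, (f n).natDegree = n)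
    (forth : ∀ m n, m ≠ n → truncL z (f m * f n) = 0) :
    ∀ j (q : Polynomial ℝ), (∀ m, j ≤ m → q.coeff m = 0) → ∀ k, j ≤ k →
      truncL z (f k * q) = 0 := by
  intro j
  induction j with
  | zero =>
    intro q hq k _
    have : q = 0 := Polynomial.ext fun m => by simpa using hq m (Nat.zero_le m)
    rw [this, mul_zero, truncL_zero]
  | succ j ih =>
    intro q hq k hk
    set q' := q - C (q.coeff j) * f j with hq'
    have hcoeff : ∀ m, j ≤ m → q'.coeff m = 0 := by
      intro m hm
      rcases eq_or_lt_of_le hm with h | h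
      · have hfj : (f j).coeff j = 1 := by
          have := (fmonic j).coeff_natDegree; rwa [fdeg j] at this
        simp [hq', ← h, hfj]
      · have h1 : q.coeff m = 0 := hq m h
        have h2 : (f j).coeff m = 0 :=
          Polynomial.coeff_eq_zero_of_natDegree_lt (by rw [fdeg j]; omega)
        simp [hq', h1, h2]
    have hsplit : f k * q = f k * q' + C (q.coeff j) * (f k * f j) := by
      rw [hq']; ring
    rw [hsplit, truncL_add, truncL_Cmul, ih q' hcoeff k (by omega),
      forth k j (by omega)]
    ring

lemma orth_lowdeg (fmonic : ∀ n, (f n).Monic) (fdeg : ∀ n, (f n).natDegree = n)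
    (forth : ∀ m n, m ≠ n → truncL z (f m * f n) = 0)
    (k : ℕ) (q : Polynomial ℝ) (hq : ∀ m, k ≤ m → q.coeff m = 0) :
    truncL z (f k * q) = 0 :=
  orth_lower fmonic fdeg forth k q hq k le_rfl

/-- uniqueness of the monic orthogonal family -/
lemma orth_unique (hz : 0 < z) {g : ℕ → Polynomial ℝ}
    (fmonic : ∀ n, (f n).Monic) (fdeg : ∀ n, (f n).natDegree = n)
    (forth : ∀ m n, m ≠ n → truncL z ((f m) * (f n)) = 0)
    (gmonic : ∀ n, (g n).Monic) (gdeg : ∀ n, (g n).natDegree = n)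
    (gorth : ∀ m n, m ≠ n → truncL z ((g m) * (g n)) = 0) (n : ℕ) : f n = g n := by
  set d := f n - g n with hd
  have hcoeff : ∀ m, n ≤ m → d.coeff m = 0 := by
    intro m hm
    rcases eq_or_lt_of_le hm with h | h
    · subst h
      have h1 : (f n).coeff n = 1 := by
        have := (fmonic n).coeff_natDegree; rwa [fdeg n] at this
      have h2 : (g n).coeff n = 1 := by
        have := (gmonic n).coeff_natDegree; rwa [gdeg n] at this
      simp [hd, h1, h2]
    · have h1 : (f n).coeff m = 0 := Polynomial.coeff_eq_zero_of_natDegree_lt (by rw [fdeg n]; omega)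
      have h2 : (g n).coeff m = 0 := Polynomial.coeff_eq_zero_of_natDegree_lt (by rw [gdeg n]; omega)
      simp [hd, h1, h2]
  have h1 : truncL z (f n * d) = 0 := orth_lowdeg fmonic fdeg forth n d hcoeff
  have h2 : truncL z (g n * d) = 0 := orth_lowdeg gmonic gdeg gorth n d hcoeff
  have h3 : truncL z (d * d) = 0 := by
    have : d * d = f n * d - g n * d := by rw [hd]; ring
    rw [this, truncL_sub, h1, h2, sub_zero]
  by_contra hne
  have hd0 : d ≠ 0 := fun h0 => hne (by rwa [hd, sub_eq_zero] at h0)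
  exact absurd h3 (ne_of_gt (truncL_sq_pos hz hd0))

end Orth

lemma gs_orth {z : ℝ} (hz : 0 < z) : ∀ n m, m < n → truncL z (gs z n * gs z m) = 0 := by
  intro n
  induction n using Nat.strong_induction_on with
  | _ n ih =>
    match n with
    | 0 => omega
    | (N + 1) =>
      intro m hm
      have hmN : m ≤ N := by omega
      rw [gs_succ, sub_mul, truncL_sub, Finset.sum_mul, truncL_sum]
      have hsum : ∑ k ∈ (Finset.range (N + 1)).attach,
          truncL z (C (truncL z (X ^ (N + 1) * gs z k.1) / truncL z (gs z k.1 * gs z k.1))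
            * gs z k.1 * gs z m) = truncL z (X ^ (N + 1) * gs z m) := by
        rw [Finset.sum_eq_single (⟨m, Finset.mem_range.mpr (by omega)⟩ :
            {x // x ∈ Finset.range (N + 1)})]
        · rw [mul_assoc, truncL_Cmul]
          have hpos : truncL z (gs z m * gs z m) ≠ 0 := ne_of_gt (truncL_sq_pos hz (gs_ne_zero z m))
          field_simp
        · intro k _ hkm
          have hk1 : k.1 ≠ m := fun h => hkm (Subtype.ext h)
          rw [mul_assoc, truncL_Cmul]
          rcases lt_or_gt_of_ne hk1 with h | h
          · rw [mul_comm (gs z k.1) (gs z m), ih m (by omega) k.1 h]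
            ring
          · have hkN := Finset.mem_range.mp k.2
            rw [ih k.1 (by omega) m h]
            ring
        · intro h
          exact absurd (Finset.mem_attach _ _) h
      rw [hsum, sub_self]

lemma gs_orth' {z : ℝ} (hz : 0 < z) : ∀ m n, m ≠ n → truncL z (gs z m * gs z n) = 0 := by
  intro m n hmn
  rcases lt_or_gt_of_ne hmn with h | h
  · rw [mul_comm]; exact gs_orth hz n m h
  · exact gs_orth hz m n h

lemma dcoeff_mul {z0 : ℝ} {p q : ℝ → Polynomial ℝ}
    (hp : ∀ k, DifferentiableAt ℝ (fun z => (p z).coeff k) z0)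
    (hq : ∀ k, DifferentiableAt ℝ (fun z => (q z).coeff k) z0) :
    ∀ k, DifferentiableAt ℝ (fun z => (p z * q z).coeff k) z0 := by
  intro k
  have hfun : (fun z => (p z * q z).coeff k)
      = fun z => ∑ ij ∈ Finset.HasAntidiagonal.antidiagonal k, (p z).coeff ij.1 * (q z).coeff ij.2 :=
    funext fun z => Polynomial.coeff_mul _ _ _
  rw [hfun]
  exact DifferentiableAt.fun_sum fun ij _ => (hp ij.1).mul (hq ij.2)

lemma gs_coeff_diff {z0 : ℝ} (hz0 : 0 < z0) (n : ℕ) :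
    ∀ k, DifferentiableAt ℝ (fun z => (gs z n).coeff k) z0 := by
  induction n using Nat.strong_induction_on with
  | _ n ih =>
    match n with
    | 0 =>
      intro k
      have : (fun z => (gs z 0).coeff k) = fun _ => (1 : Polynomial ℝ).coeff k :=
        funext fun z => by rw [gs_zero]
      rw [this]; exact differentiableAt_const _
    | (N + 1) =>
      intro k
      have hfun : (fun z => (gs z (N + 1)).coeff k) = fun z =>
          (X ^ (N + 1) : Polynomial ℝ).coeff k - ∑ j ∈ (Finset.range (N + 1)).attach,
            (truncL z (X ^ (N + 1) * gs z j.1) / truncL z (gs z j.1 * gs z j.1))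
              * (gs z j.1).coeff k := by
        funext z
        rw [gs_succ, Polynomial.coeff_sub, Polynomial.finset_sum_coeff]
        congr 1
        exact Finset.sum_congr rfl fun j _ => Polynomial.coeff_C_mul _
      rw [hfun]
      refine (differentiableAt_const _).sub (DifferentiableAt.fun_sum fun j _ => ?_)
      have hjN := Finset.mem_range.mp j.2
      have hdj : ∀ m, DifferentiableAt ℝ (fun z => (gs z j.1).coeff m) z0 := ih j.1 hjN
      have hconst : ∀ m, DifferentiableAt ℝ
          (fun _ : ℝ => (X ^ (N + 1) : Polynomial ℝ).coeff m) z0 :=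
        fun m => differentiableAt_const _
      have hN : DifferentiableAt ℝ (fun z => truncL z (X ^ (N + 1) * gs z j.1)) z0 := by
        refine differentiableAt_truncL (N + 1 + j.1) _ z0 (fun z => ?_) ?_
        · exact le_trans (Polynomial.natDegree_mul_le)
            (by rw [Polynomial.natDegree_X_pow]; exact Nat.add_le_add_left (gs_natDegree_le z j.1) _)
        · exact dcoeff_mul hconst hdj
      have hD : DifferentiableAt ℝ (fun z => truncL z (gs z j.1 * gs z j.1)) z0 := by
        refine differentiableAt_truncL (j.1 + j.1) _ z0 (fun z => ?_) ?_
        · exact le_trans (Polynomial.natDegree_mul_le)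
            (Nat.add_le_add (gs_natDegree_le z j.1) (gs_natDegree_le z j.1))
        · exact dcoeff_mul hdj hdj
      have hDne : truncL z0 (gs z0 j.1 * gs z0 j.1) ≠ 0 :=
        ne_of_gt (truncL_sq_pos hz0 (gs_ne_zero z0 j.1))
      exact (hN.div hD hDne).mul (hdj k)

noncomputable def Dz (p : ℝ → Polynomial ℝ) (z0 : ℝ) (d : ℕ) : Polynomial ℝ :=
  ∑ k ∈ Finset.range (d + 1), C (deriv (fun z => (p z).coeff k) z0) * X ^ k

lemma Dz_coeff (p : ℝ → Polynomial ℝ) (z0 : ℝ) (d m : ℕ) :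
    (Dz p z0 d).coeff m
      = if m ≤ d then deriv (fun z => (p z).coeff m) z0 else 0 := by
  unfold Dz
  rw [Polynomial.finset_sum_coeff]
  have : ∀ k ∈ Finset.range (d + 1),
      (C (deriv (fun z => (p z).coeff k) z0) * X ^ k).coeff m
        = if k = m then deriv (fun z => (p z).coeff k) z0 else 0 := by
    intro k _
    rw [Polynomial.coeff_C_mul, Polynomial.coeff_X_pow]
    by_cases h : k = m
    · subst h; simp
    · simp [h, Ne.symm h]
  rw [Finset.sum_congr rfl this, Finset.sum_ite_eq' (Finset.range (d + 1)) m]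
  simp [Nat.lt_succ_iff]

lemma Dz_natDegree_le (p : ℝ → Polynomial ℝ) (z0 : ℝ) (d : ℕ) :
    (Dz p z0 d).natDegree ≤ d := by
  refine Polynomial.natDegree_sum_le_of_forall_le _ _ fun k hk => ?_
  refine le_trans (Polynomial.natDegree_C_mul_le _ _) ?_
  rw [Polynomial.natDegree_X_pow]
  exact Nat.lt_succ_iff.mp (Finset.mem_range.mp hk)

lemma truncL_X_pow (z : ℝ) (k : ℕ) : truncL z (X ^ k) = mom k z := by
  unfold truncL mom; simp

lemma hasDerivAt_truncL' (d : ℕ) (c : ℝ → Polynomial ℝ) (z0 : ℝ)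
    (hd : ∀ z, (c z).natDegree ≤ d)
    (hc : ∀ k, DifferentiableAt ℝ (fun z => (c z).coeff k) z0) :
    HasDerivAt (fun z => truncL z (c z))
      (((c z0).eval z0 + (c z0).eval (-z0)) * Real.exp (-z0 ^ 2)
        + truncL z0 (Dz c z0 d)) z0 := by
  have := hasDerivAt_truncL d c z0 hd hc
  convert this using 2
  unfold Dz
  rw [truncL_sum]
  exact Finset.sum_congr rfl fun k _ => by rw [truncL_Cmul, truncL_X_pow]

lemma Dz_mul {z0 : ℝ} (p q : ℝ → Polynomial ℝ) (a b : ℕ)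
    (hpa : ∀ z, (p z).natDegree ≤ a) (hqb : ∀ z, (q z).natDegree ≤ b)
    (hp : ∀ k, DifferentiableAt ℝ (fun z => (p z).coeff k) z0)
    (hq : ∀ k, DifferentiableAt ℝ (fun z => (q z).coeff k) z0) :
    Dz (fun z => p z * q z) z0 (a + b) = Dz p z0 a * q z0 + p z0 * Dz q z0 b := by
  have hpz : ∀ i, a < i → (fun z => (p z).coeff i) = fun _ => (0:ℝ) := by
    intro i hi
    funext z
    exact Polynomial.coeff_eq_zero_of_natDegree_lt (lt_of_le_of_lt (hpa z) hi)
  have hqz : ∀ j, b < j → (fun z => (q z).coeff j) = fun _ => (0:ℝ) := by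
    intro j hj
    funext z
    exact Polynomial.coeff_eq_zero_of_natDegree_lt (lt_of_le_of_lt (hqb z) hj)
  ext m
  rw [Dz_coeff, Polynomial.coeff_add, Polynomial.coeff_mul, Polynomial.coeff_mul,
    ← Finset.sum_add_distrib]
  by_cases hm : m ≤ a + b
  · rw [if_pos hm]
    have hfun : (fun z => ((fun z => p z * q z) z).coeff m)
        = fun z => ∑ ij ∈ Finset.HasAntidiagonal.antidiagonal m, (p z).coeff ij.1 * (q z).coeff ij.2 :=
      funext fun z => Polynomial.coeff_mul _ _ _
    rw [hfun]
    have hder : HasDerivAt (fun z => ∑ ij ∈ Finset.HasAntidiagonal.antidiagonal m, (p z).coeff ij.1 * (q z).coeff ij.2)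
        (∑ ij ∈ Finset.HasAntidiagonal.antidiagonal m,
          (deriv (fun z => (p z).coeff ij.1) z0 * (q z0).coeff ij.2
            + (p z0).coeff ij.1 * deriv (fun z => (q z).coeff ij.2) z0)) z0 :=
      HasDerivAt.fun_sum fun ij _ => ((hp ij.1).hasDerivAt.fun_mul (hq ij.2).hasDerivAt)
    rw [hder.deriv]
    refine Finset.sum_congr rfl fun ij _ => ?_
    congr 1
    · by_cases hia : ij.1 ≤ a
      · rw [Dz_coeff, if_pos hia]
      · push_neg at hia
        rw [Dz_coeff, if_neg (by omega), hpz ij.1 hia]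
        simp
    · by_cases hjb : ij.2 ≤ b
      · rw [Dz_coeff, if_pos hjb]
      · push_neg at hjb
        rw [Dz_coeff, if_neg (by omega), hqz ij.2 hjb]
        simp
  · rw [if_neg hm]
    symm
    refine Finset.sum_eq_zero fun ij hij => ?_
    have hij' : ij.1 + ij.2 = m := Finset.HasAntidiagonal.mem_antidiagonal.mp hij
    by_cases hia : ij.1 ≤ a
    · have hjb : b < ij.2 := by omega
      rw [Dz_coeff q z0 b ij.2, if_neg (by omega), Polynomial.coeff_eq_zero_of_natDegree_lt
        (lt_of_le_of_lt (hqb z0) hjb)]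
      ring
    · push_neg at hia
      rw [Dz_coeff p z0 a ij.1, if_neg (by omega), Polynomial.coeff_eq_zero_of_natDegree_lt
        (lt_of_le_of_lt (hpa z0) hia)]
      ring

lemma truncL_gs_Dz (z0 : ℝ) (hz0 : 0 < z0) (n : ℕ) :
    truncL z0 (gs z0 n * Dz (fun z => gs z n) z0 n) = 0 := by
  refine orth_lowdeg (gs_monic z0) (gs_natDegree z0) (gs_orth' hz0) n _ fun m hm => ?_
  rcases eq_or_lt_of_le hm with h | h
  · rw [Dz_coeff, if_pos (le_of_eq h.symm)]
    have : (fun z => (gs z n).coeff m) = fun _ => (1:ℝ) := funext fun z => by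
      rw [← h, gs_coeff_self]
    rw [this]
    exact deriv_const _ _
  · rw [Dz_coeff, if_neg (by omega)]

lemma hasDerivAt_H {z0 : ℝ} (hz0 : 0 < z0) (n : ℕ) :
    HasDerivAt (fun z => truncL z (gs z n * gs z n))
      (((gs z0 n).eval z0 ^ 2 + (gs z0 n).eval (-z0) ^ 2) * Real.exp (-z0 ^ 2)) z0 := by
  have hdeg : ∀ z, (gs z n * gs z n).natDegree ≤ n + n := fun z =>
    le_trans Polynomial.natDegree_mul_le
      (Nat.add_le_add (gs_natDegree_le z n) (gs_natDegree_le z n))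
  have hc : ∀ k, DifferentiableAt ℝ (fun z => (gs z n * gs z n).coeff k) z0 :=
    dcoeff_mul (gs_coeff_diff hz0 n) (gs_coeff_diff hz0 n)
  have h1 := hasDerivAt_truncL' (n + n) (fun z => gs z n * gs z n) z0 hdeg hc
  have h2 : Dz (fun z => gs z n * gs z n) z0 (n + n)
      = Dz (fun z => gs z n) z0 n * gs z0 n + gs z0 n * Dz (fun z => gs z n) z0 n :=
    Dz_mul _ _ n n (fun z => gs_natDegree_le z n) (fun z => gs_natDegree_le z n)
      (gs_coeff_diff hz0 n) (gs_coeff_diff hz0 n)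
  rw [h2] at h1
  have h3 : truncL z0 (Dz (fun z => gs z n) z0 n * gs z0 n + gs z0 n * Dz (fun z => gs z n) z0 n)
      = 0 := by
    rw [truncL_add, mul_comm (Dz (fun z => gs z n) z0 n), truncL_gs_Dz z0 hz0 n]
    ring
  rw [h3, add_zero] at h1
  convert h1 using 2 <;> simp [Polynomial.eval_mul] <;> ring

lemma ftc_weight (z : ℝ) (u : Polynomial ℝ) :
    truncL z u.derivative - 2 * truncL z (X * u)
      = u.eval z * Real.exp (-z ^ 2) - u.eval (-z) * Real.exp (-z ^ 2) := by
  have hcont : Continuous fun x : ℝ =>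
      (u.derivative.eval x - 2 * x * u.eval x) * Real.exp (-x ^ 2) := by
    apply Continuous.mul
    · exact (u.derivative.continuous_aeval).sub
        ((continuous_const.mul continuous_id).mul u.continuous_aeval)
    · continuity
  have key : (∫ x in (-z)..z, (u.derivative.eval x - 2 * x * u.eval x) * Real.exp (-x ^ 2))
      = u.eval z * Real.exp (-z ^ 2) - u.eval (-z) * Real.exp (-(-z) ^ 2) := by
    apply intervalIntegral.integral_eq_sub_of_hasDerivAt
    · intro x _
      have hx2 : HasDerivAt (fun x : ℝ => -x ^ 2) (-(2 * x)) x := by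
        simpa using (hasDerivAt_pow 2 x).fun_neg
      have h1 : HasDerivAt (fun x : ℝ => Real.exp (-x ^ 2))
          (Real.exp (-x ^ 2) * (-(2 * x))) x := hx2.exp
      have h2 : HasDerivAt (fun x : ℝ => u.eval x) (u.derivative.eval x) x :=
        u.hasDerivAt x
      have := h2.fun_mul h1
      refine this.congr_deriv ?_
      ring
    · exact hcont.intervalIntegrable _ _
  have hsplit : ∀ x : ℝ, (u.derivative.eval x - 2 * x * u.eval x) * Real.exp (-x ^ 2)
      = u.derivative.eval x * Real.exp (-x ^ 2) - 2 * ((X * u).eval x * Real.exp (-x ^ 2)) := by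
    intro x; simp [Polynomial.eval_mul]; ring
  rw [show (-(-z) ^ 2 : ℝ) = -z ^ 2 by ring] at key
  calc truncL z u.derivative - 2 * truncL z (X * u)
      = ∫ x in (-z)..z, (u.derivative.eval x - 2 * x * u.eval x) * Real.exp (-x ^ 2) := by
        unfold truncL
        rw [← intervalIntegral.integral_const_mul,
          ← intervalIntegral.integral_sub (truncInt z u.derivative)
            (((truncInt z (X * u))).const_mul 2)]
        exact intervalIntegral.integral_congr fun x _ => (hsplit x).symm
    _ = _ := key

lemma gs_parity {z : ℝ} (hz : 0 < z) (n : ℕ) (x : ℝ) :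
    (gs z n).eval (-x) = (-1 : ℝ) ^ n * (gs z n).eval x := by
  set Q : ℕ → Polynomial ℝ := fun n => C ((-1 : ℝ) ^ n) * (gs z n).comp (-X) with hQ
  have hXneg : (-X : Polynomial ℝ).natDegree = 1 := by
    rw [Polynomial.natDegree_neg, Polynomial.natDegree_X]
  have hQdeg : ∀ n, (Q n).natDegree = n := by
    intro n
    rw [hQ]
    rw [Polynomial.natDegree_C_mul (by positivity : ((-1:ℝ))^n ≠ 0)]
    · rw [Polynomial.natDegree_comp, hXneg, gs_natDegree, mul_one]
  have hQeval : ∀ n y, (Q n).eval y = (-1 : ℝ) ^ n * (gs z n).eval (-y) := by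
    intro n y
    simp [hQ]
  have hQmonic : ∀ n, (Q n).Monic := by
    intro n
    have hlc : (Q n).leadingCoeff = 1 := by
      rw [hQ]
      simp only
      rw [Polynomial.leadingCoeff_mul, Polynomial.leadingCoeff_C,
        Polynomial.leadingCoeff_comp (by rw [hXneg]; norm_num),
        Polynomial.leadingCoeff_neg, Polynomial.leadingCoeff_X, (gs_monic z n).leadingCoeff,
        gs_natDegree]
      rw [one_mul, ← pow_add]
      exact Even.neg_one_pow ⟨n, rfl⟩
    exact hlc
  have hQorth : ∀ m n, m ≠ n → truncL z (Q m * Q n) = 0 := by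
    intro m n hmn
    have hpt : ∀ x : ℝ, (Q m * Q n).eval x * Real.exp (-x ^ 2)
        = (-1 : ℝ) ^ (m + n) * ((gs z m * gs z n).eval (-x) * Real.exp (-(-x) ^ 2)) := by
      intro x
      rw [Polynomial.eval_mul, hQeval, hQeval, Polynomial.eval_mul]
      rw [show (-(-x) ^ 2 : ℝ) = -x ^ 2 by ring, pow_add]
      ring
    unfold truncL
    simp_rw [hpt]
    rw [intervalIntegral.integral_const_mul]
    have : (∫ x in (-z)..z, (gs z m * gs z n).eval (-x) * Real.exp (-(-x) ^ 2))
        = ∫ x in (-z)..z, (gs z m * gs z n).eval x * Real.exp (-x ^ 2) := by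
      rw [intervalIntegral.integral_comp_neg (fun x => (gs z m * gs z n).eval x
        * Real.exp (-x ^ 2))]
      rw [neg_neg]
    rw [this]
    have := gs_orth' hz m n hmn
    unfold truncL at this
    rw [this, mul_zero]
  have huniq : gs z n = Q n :=
    orth_unique hz (gs_monic z) (gs_natDegree z) (gs_orth' hz) hQmonic hQdeg hQorth n
  calc (gs z n).eval (-x) = (Q n).eval (-x) := by rw [← huniq]
    _ = (-1 : ℝ) ^ n * (gs z n).eval x := by rw [hQeval, neg_neg]

theorem truncated_hermite_toda_gamma (P : ℝ → ℕ → Polynomial ℝ) (γ h : ℕ → ℝ → ℝ)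
    (hmonic : ∀ z n, (P z n).Monic) (hdeg : ∀ z n, (P z n).natDegree = n)
    (horth : ∀ z, 0 < z → ∀ m n, m ≠ n → truncL z (P z m * P z n) = 0)
    (hP0 : ∀ z, P z 0 = 1) (hP1 : ∀ z, P z 1 = X)
    (hrec : ∀ z, 0 < z → ∀ n, X * P z (n + 1) = P z (n + 2) + C (γ (n + 1) z) * P z n)
    (hh : ∀ n z, h n z = truncL z (P z n * P z n)) (hγ0 : ∀ z, γ 0 z = 0)
    (hdiff : ∀ n z, 0 < z → DifferentiableAt ℝ (γ n) z) :
    ∀ n : ℕ, 1 ≤ n → ∀ z : ℝ, 0 < z →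
      z * deriv (γ n) z = 2 * γ n z * (γ (n - 1) z - γ (n + 1) z + 1) := by
  -- global facts
  have hPg : ∀ w : ℝ, 0 < w → ∀ k, P w k = gs w k := fun w hw k =>
    orth_unique hw (hmonic w) (hdeg w) (horth w hw) (gs_monic w) (gs_natDegree w)
      (gs_orth' hw) k
  have hpos : ∀ w : ℝ, 0 < w → ∀ k, 0 < h k w := fun w hw k => by
    rw [hh]; exact truncL_sq_pos hw (hmonic w k).ne_zero
  have horthlow : ∀ w : ℝ, 0 < w → ∀ k (q : Polynomial ℝ),
      (∀ m, k ≤ m → q.coeff m = 0) → truncL w (P w k * q) = 0 := fun w hw k q hq =>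
    orth_lowdeg (hmonic w) (hdeg w) (horth w hw) k q hq
  have hpar : ∀ w : ℝ, 0 < w → ∀ k (x : ℝ),
      (P w k).eval (-x) = (-1 : ℝ) ^ k * (P w k).eval x := fun w hw k x => by
    rw [hPg w hw k]; exact gs_parity hw k x
  have hXPP : ∀ w : ℝ, 0 < w → ∀ k, truncL w (X * P w (k + 1) * P w k) = h (k + 1) w := by
    intro w hw k
    match k with
    | 0 =>
      have : X * P w 1 * P w 0 = P w 1 * P w 1 := by rw [hP0, hP1]; ring
      rw [this, hh]
    | (j + 1) =>
      have e2 : X * P w (j + 2) * P w (j + 1)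
          = P w (j + 2) * P w (j + 2) + C (γ (j + 1) w) * (P w (j + 2) * P w j) := by
        calc X * P w (j + 2) * P w (j + 1) = P w (j + 2) * (X * P w (j + 1)) := by ring
          _ = _ := by rw [hrec w hw j]; ring
      rw [e2, truncL_add, truncL_Cmul, horth w hw (j + 2) j (by omega), hh]
      ring
  have hgam : ∀ w : ℝ, 0 < w → ∀ k, γ (k + 1) w * h k w = h (k + 1) w := by
    intro w hw k
    have e2 : X * P w (k + 1) * P w k
        = P w (k + 2) * P w k + C (γ (k + 1) w) * (P w k * P w k) := by
      rw [hrec w hw k]; ring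
    have h2 := hXPP w hw k
    rw [e2, truncL_add, truncL_Cmul, horth w hw (k + 2) k (by omega), ← hh] at h2
    linarith
  have hstar : ∀ w : ℝ, 0 < w → ∀ k,
      2 * (P w (k + 1)).eval w * (P w k).eval w * Real.exp (-w ^ 2)
        = ((k : ℝ) + 1) * h k w - 2 * h (k + 1) w := by
    intro w hw k
    have hftc := ftc_weight w (P w (k + 1) * P w k)
    have hu_neg : (P w (k + 1) * P w k).eval (-w) = -(P w (k + 1) * P w k).eval w := by
      rw [Polynomial.eval_mul, Polynomial.eval_mul, hpar w hw (k + 1), hpar w hw k, pow_succ]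
      have hsq : (-1 : ℝ) ^ k * (-1 : ℝ) ^ k = 1 := by
        rw [← pow_add]; exact Even.neg_one_pow ⟨k, rfl⟩
      linear_combination (-((P w (k+1)).eval w * (P w k).eval w)) * hsq
    have hXu : truncL w (X * (P w (k + 1) * P w k)) = h (k + 1) w := by
      rw [← mul_assoc]; exact hXPP w hw k
    have t1 : truncL w (P w (k + 1) * (P w k).derivative) = 0 := by
      refine horthlow w hw (k + 1) _ fun m hm => ?_
      rw [Polynomial.coeff_derivative,
        Polynomial.coeff_eq_zero_of_natDegree_lt (by rw [hdeg]; omega), zero_mul]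
    have t2 : truncL w ((P w (k + 1)).derivative * P w k) = ((k : ℝ) + 1) * h k w := by
      set r := (P w (k + 1)).derivative - C ((k : ℝ) + 1) * P w k with hr
      have hrc : ∀ m, k ≤ m → r.coeff m = 0 := by
        intro m hm
        rcases eq_or_lt_of_le hm with hq | hq
        · subst hq
          rw [hr, Polynomial.coeff_sub, Polynomial.coeff_derivative, Polynomial.coeff_C_mul]
          have c1 : (P w (k + 1)).coeff (k + 1) = 1 := by
            have := (hmonic w (k + 1)).coeff_natDegree; rwa [hdeg] at this
          have c2 : (P w k).coeff k = 1 := by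
            have := (hmonic w k).coeff_natDegree; rwa [hdeg] at this
          rw [c1, c2]; ring
        · rw [hr, Polynomial.coeff_sub, Polynomial.coeff_derivative, Polynomial.coeff_C_mul,
            Polynomial.coeff_eq_zero_of_natDegree_lt (p := P w (k + 1)) (by rw [hdeg]; omega),
            Polynomial.coeff_eq_zero_of_natDegree_lt (p := P w k) (by rw [hdeg]; omega)]
          ring
      have hsplit : (P w (k + 1)).derivative * P w k
          = C ((k : ℝ) + 1) * (P w k * P w k) + P w k * r := by
        rw [hr]; ring
      rw [hsplit, truncL_add, truncL_Cmul, horthlow w hw k r hrc, ← hh]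
      ring
    have hdm : truncL w (P w (k + 1) * P w k).derivative = ((k : ℝ) + 1) * h k w := by
      rw [Polynomial.derivative_mul, truncL_add, t1, t2]; ring
    rw [hdm, hXu, hu_neg] at hftc
    simp only [Polynomial.eval_mul] at hftc
    linarith
  intro n hn z hz
  have hder : ∀ k, HasDerivAt (h k)
      (2 * (P z k).eval z ^ 2 * Real.exp (-z ^ 2)) z := by
    intro k
    have hgsD := hasDerivAt_H hz k
    have heq : h k =ᶠ[nhds z] fun w => truncL w (gs w k * gs w k) := by
      filter_upwards [eventually_gt_nhds hz] with w hw
      rw [hh, hPg w hw k]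
    have := hgsD.congr_of_eventuallyEq heq
    refine this.congr_deriv ?_
    rw [← hPg z hz k]
    rw [hpar z hz k z]
    have hsq : ((-1 : ℝ) ^ k) ^ 2 = 1 := by
      rw [← pow_mul, mul_comm, pow_mul]; norm_num
    rw [mul_pow, hsq]
    ring
  obtain ⟨m, rfl⟩ : ∃ m, n = m + 1 := ⟨n - 1, by omega⟩
  have hne : h m z ≠ 0 := ne_of_gt (hpos z hz m)
  have hdiv := (hder (m + 1)).div (hder m) hne
  have hev : γ (m + 1) =ᶠ[nhds z] fun w => h (m + 1) w / h m w := by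
    filter_upwards [eventually_gt_nhds hz] with w hw
    rw [eq_div_iff (ne_of_gt (hpos w hw m))]
    exact hgam w hw m
  have hγder := hdiv.congr_of_eventuallyEq hev
  rw [hγder.deriv]
  simp only [Nat.add_sub_cancel]
  -- abbreviations
  set E := Real.exp (-z ^ 2) with hE
  set A := (P z (m + 1)).eval z with hA
  set B := (P z m).eval z with hB
  have e1 := hgam z hz m
  have e2 := hgam z hz (m + 1)
  have key : z * E * (A ^ 2 - γ (m + 1) z * B ^ 2)
      = h (m + 1) z * (γ m z - γ (m + 2) z + 1) := by
    match m with
    | 0 =>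
      show z * E * (A ^ 2 - γ 1 z * B ^ 2) = h 1 z * (γ 0 z - γ 2 z + 1)
      have sA : A = (P z 1).eval z := by rw [hA]
      have e1' : γ 1 z * h 0 z = h 1 z := hgam z hz 0
      have e2' : γ 2 z * h 1 z = h 2 z := hgam z hz 1
      have s1 := hstar z hz 1
      push_cast at s1
      have r1 : z * A = (P z 2).eval z + γ 1 z * B := by
        have := congrArg (Polynomial.eval z) (hrec z hz 0)
        simpa [← hA, ← hB] using this
      have eqA : A = z := by rw [hA, hP1]; simp
      have eqB : B = 1 := by rw [hB, hP0]; simp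
      have g0h : γ 0 z = 0 := hγ0 z
      linear_combination (E * A) * r1 + (1 / 2) * s1 + e2' + (E * (P z 2).eval z) * sA
        + (E * γ 1 z * B) * eqA - (z * E * γ 1 z * B) * eqB - h 1 z * g0h
    | (j + 1) =>
      show z * E * (A ^ 2 - γ (j + 2) z * B ^ 2)
          = h (j + 2) z * (γ (j + 1) z - γ (j + 3) z + 1)
      have e1' : γ (j + 2) z * h (j + 1) z = h (j + 2) z := hgam z hz (j + 1)
      have e2' : γ (j + 3) z * h (j + 2) z = h (j + 3) z := hgam z hz (j + 2)
      have e3' : γ (j + 1) z * h j z = h (j + 1) z := hgam z hz j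
      have s1 : 2 * (P z (j + 3)).eval z * (P z (j + 2)).eval z * Real.exp (-z ^ 2)
          = (((j + 2 : ℕ) : ℝ) + 1) * h (j + 2) z - 2 * h (j + 3) z := hstar z hz (j + 2)
      have s3 : 2 * (P z (j + 1)).eval z * (P z j).eval z * Real.exp (-z ^ 2)
          = (((j : ℕ) : ℝ) + 1) * h j z - 2 * h (j + 1) z := hstar z hz j
      have sA : A = (P z (j + 2)).eval z := by rw [hA]
      have sB : B = (P z (j + 1)).eval z := by rw [hB]
      have r1 : z * A = (P z (j + 3)).eval z + γ (j + 2) z * B := by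
        have := congrArg (Polynomial.eval z) (hrec z hz (j + 1))
        simpa [← hA, ← hB] using this
      have r2 : z * B = A + γ (j + 1) z * (P z j).eval z := by
        have := congrArg (Polynomial.eval z) (hrec z hz j)
        simpa [← hA, ← hB] using this
      push_cast at s1
      rw [← sA] at s1
      rw [← sB] at s3
      linear_combination (E * A) * r1 - (E * γ (j + 2) z * B) * r2 + (1 / 2) * s1
        - (γ (j + 2) z * γ (j + 1) z / 2) * s3 + e2'
        + (γ (j + 1) z - ((j : ℝ) + 1) / 2) * e1'
        - (((j : ℝ) + 1) * γ (j + 2) z / 2) * e3'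
  calc z * ((2 * A ^ 2 * E * h m z - h (m + 1) z * (2 * B ^ 2 * E)) / h m z ^ 2)
      = (2 * (z * E * (A ^ 2 - γ (m + 1) z * B ^ 2))) / h m z := by
        rw [← e1]; field_simp
    _ = (2 * (h (m + 1) z * (γ m z - γ (m + 2) z + 1))) / h m z := by rw [key]
    _ = 2 * γ (m + 1) z * (γ m z - γ (m + 2) z + 1) := by
        rw [← e1]; field_simp
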